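/- Let z ∈ 𝕊 have infinite order. Then the topology τ of A_G(s) is strictly coarser than 𝒯_z, i.e. τ ≤ 𝒯_z and τ ≠ 𝒯_z. -/

import Mathlib

open Filter Topology

noncomputable section

/-- The convergent sequence `s = {0} ∪ {1/n : n ∈ ℕ}` as a subspace of `ℝ`. -/
def sSet : Set ℝ := {x : ℝ | x = 0 ∨ ∃ n : ℕ, 0 < n ∧ x = 1 / n}

/-- The natural map `s → ℤ^(ℕ)`, sending `0 ↦ 0` and `1/n ↦ e_n = single n 1`. -/
def sMap (x : sSet) : ℕ →₀ ℤ :=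
  if (x : ℝ) = 0 then 0 else Finsupp.single ⌈(1 : ℝ) / (x : ℝ)⌉₊ 1

/-- The topology of the Graev free abelian topological group `A_G(s)`, i.e. the finest
group topology on `ℤ^(ℕ)` making `sMap : s → ℤ^(ℕ)` continuous.  In Mathlib's lattice of
(group) topologies `t ≤ s` means `t` is *finer* than `s`, so the finest such group topology
is the `sInf` of the collection of all group topologies making `sMap` continuous; this
`sInf` itself makes `sMap` continuous, since `Continuous` into `t` means
`coinduced sMap _ ≤ t.toTopologicalSpace`, a condition preserved by `sInf`. -/
def tauGT : AddGroupTopology (ℕ →₀ ℤ) :=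
  sInf {t : AddGroupTopology (ℕ →₀ ℤ) | @Continuous _ _ _ t.toTopologicalSpace sMap}

/-- The topology `τ` of `A_G(s)` on `ℤ^(ℕ)`. -/
def tau : TopologicalSpace (ℕ →₀ ℤ) := tauGT.toTopologicalSpace

/-- `c₀(𝕊) = {(z_n) ∈ 𝕊^ℕ : z_n → 1}` as a subgroup of `𝕊^ℕ`. -/
def c0S : Subgroup (ℕ → Circle) where
  carrier := {u : ℕ → Circle | Tendsto u atTop (nhds 1)}
  one_mem' := tendsto_const_nhds
  mul_mem' := fun hu hv => by have h := hu.mul hv; rw [mul_one] at h; exact h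
  inv_mem' := fun hu => by have h := hu.inv; rw [inv_one] at h; exact h

/-- The group `F₀(𝕊)`: the group `c₀(𝕊)` endowed (below) with the sup-metric
`d((z_n),(w_n)) = sup_n |z_n - w_n|`. -/
def F0 : Type := c0S

instance : CommGroup F0 := inferInstanceAs (CommGroup c0S)

namespace F0

/-- The underlying sequence of an element of `F₀(𝕊)`. -/
def seq (u : F0) : ℕ → Circle := Subtype.val (p := fun u => u ∈ c0S) u

lemma seq_tendsto (u : F0) : Tendsto u.seq atTop (nhds 1) :=
  (Subtype.prop (p := fun u => u ∈ c0S) u : _)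

lemma ext {u v : F0} (h : u.seq = v.seq) : u = v :=
  Subtype.ext (p := fun u => u ∈ c0S) h

/-- Construct an element of `F₀(𝕊)` from a sequence converging to `1`. -/
def mk (u : ℕ → Circle) (hu : Tendsto u atTop (nhds 1)) : F0 :=
  Subtype.mk (p := fun u => u ∈ c0S) u hu

lemma dist_circle_le (a b : Circle) : dist a b ≤ 2 := by
  have : dist (a : ℂ) (b : ℂ) ≤ ‖(a : ℂ)‖ + ‖(b : ℂ)‖ := by
    rw [dist_eq_norm]; exact norm_sub_le _ _
  have ha : ‖(a : ℂ)‖ = 1 := a.norm_coe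
  have hb : ‖(b : ℂ)‖ = 1 := b.norm_coe
  calc dist a b = dist (a : ℂ) (b : ℂ) := rfl
    _ ≤ 2 := by rw [ha, hb] at this; linarith

lemma bddAbove_dist (u v : F0) :
    BddAbove (Set.range fun n => dist (u.seq n) (v.seq n)) := by
  refine ⟨2, ?_⟩
  rintro x ⟨n, rfl⟩
  exact dist_circle_le _ _

/-- `F₀(𝕊)` endowed with the metric `d((z_n),(w_n)) = sup_n |z_n - w_n|`. -/
instance : MetricSpace F0 where
  dist u v := ⨆ n, dist (u.seq n) (v.seq n)
  dist_self u := by simp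
  dist_comm u v := by simp only [dist_comm]
  dist_triangle u v w := by
    refine ciSup_le fun n => ?_
    calc dist (u.seq n) (w.seq n) ≤ dist (u.seq n) (v.seq n) + dist (v.seq n) (w.seq n) :=
          dist_triangle _ _ _
      _ ≤ (⨆ m, dist (u.seq m) (v.seq m)) + ⨆ m, dist (v.seq m) (w.seq m) :=
          add_le_add (le_ciSup (bddAbove_dist u v) n) (le_ciSup (bddAbove_dist v w) n)
  eq_of_dist_eq_zero := by
    intro u v h
    refine ext (funext fun n => ?_)
    have hn : dist (u.seq n) (v.seq n) ≤ 0 := h ▸ le_ciSup (bddAbove_dist u v) n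
    exact eq_of_dist_eq_zero (le_antisymm hn dist_nonneg)

lemma dist_def (u v : F0) : dist u v = ⨆ n, dist (u.seq n) (v.seq n) := rfl

end F0

/-- The monomorphism `T_z : ℤ^(ℕ) → A_G(s) × F₀(𝕊)`, `T_z((n_k)) = ((n_k), (z^{n_k})_k)`. -/
def Tz (z : Circle) (x : ℕ →₀ ℤ) : (ℕ →₀ ℤ) × F0 :=
  ⟨x, F0.mk (fun k => z ^ (x k)) (by
    have h : ∀ᶠ k in atTop, (1 : Circle) = z ^ (x k) := by
      obtain ⟨N, hN⟩ := x.support.finite_toSet.bddAbove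
      filter_upwards [eventually_ge_atTop (N + 1)] with k hk
      have hx : x k = 0 := by
        by_contra hne
        have : k ≤ N := hN (Finsupp.mem_support_iff.mpr hne)
        omega
      simp [hx]
    exact tendsto_const_nhds.congr' h)⟩

/-- The topology `𝒯_z` on `ℤ^(ℕ)` induced from `A_G(s) × F₀(𝕊)` via `T_z`,
where the first factor carries `τ` and the second the sup-metric topology. -/
def TzTop (z : Circle) : TopologicalSpace (ℕ →₀ ℤ) :=
  TopologicalSpace.induced (Tz z) (@instTopologicalSpaceProd _ _ tau inferInstance)

/-- For `z ∈ 𝕊` of infinite order, `τ` is strictly coarser than `𝒯_z`: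
every `τ`-open set is `𝒯_z`-open, and `τ ≠ 𝒯_z`. -/
theorem tau_lt_TzTop (z : Circle) (hz : ∀ n : ℕ, 0 < n → z ^ n ≠ 1) :
    (∀ U : Set (ℕ →₀ ℤ), IsOpen[tau] U → IsOpen[TzTop z] U) ∧ tau ≠ TzTop z := by
  have hz1 : z ≠ 1 := by simpa using hz 1 one_pos
  letI : TopologicalSpace (ℕ →₀ ℤ) := tau
  constructor
  · -- τ ≤ 𝒯_z : pull back along the first projection
    intro U hU
    rw [TzTop, isOpen_induced_iff]
    refine ⟨Prod.fst ⁻¹' U, (@continuous_fst _ _ tau _).isOpen_preimage U hU, rfl⟩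
  · -- τ ≠ 𝒯_z
    intro heq
    -- sMap is continuous into τ
    have hcont : Continuous[_, tau] sMap := by
      rw [tau, tauGT, AddGroupTopology.toTopologicalSpace_sInf, continuous_sInf_rng]
      rintro t ⟨t', ht', rfl⟩
      exact ht'
    -- the sequence 1/(n+1) in sSet converges to 0
    have hmem : ∀ n : ℕ, (1 / (n + 1 : ℕ) : ℝ) ∈ sSet := fun n =>
      Or.inr ⟨n + 1, Nat.succ_pos n, by push_cast; ring⟩
    have h0mem : (0 : ℝ) ∈ sSet := Or.inl rfl
    have hseq : Tendsto (fun n : ℕ => (⟨(1 / (n + 1 : ℕ) : ℝ), hmem n⟩ : sSet)) atTop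
        (nhds (⟨0, h0mem⟩ : sSet)) := by
      rw [tendsto_subtype_rng]
      simpa using (tendsto_one_div_add_atTop_nhds_zero_nat :
        Tendsto (fun n : ℕ => 1 / ((n : ℝ) + 1)) atTop (𝓝 0))
    -- hence e_{n+1} → 0 in τ
    have hsMap0 : sMap (⟨0, h0mem⟩ : sSet) = 0 := by simp [sMap]
    have hsMapn : ∀ n : ℕ, sMap (⟨(1 / (n + 1 : ℕ) : ℝ), hmem n⟩ : sSet)
        = Finsupp.single (n + 1) 1 := by
      intro n
      have hne : ((1 : ℝ) / (n + 1 : ℕ)) ≠ 0 := by positivity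
      have hcast : ((n : ℝ) + 1) = ((n + 1 : ℕ) : ℝ) := by push_cast; ring
      simp only [sMap, hne, if_false, one_div, inv_inv, Nat.cast_add, Nat.cast_one]
      rw [hcast, if_neg (show ¬((n + 1 : ℕ) : ℝ)⁻¹ = 0 by positivity), Nat.ceil_natCast]
    have h1 : Tendsto (fun n : ℕ => (Finsupp.single (n + 1) 1 : ℕ →₀ ℤ)) atTop
        (@nhds _ tau 0) := by
      have := (hcont.tendsto (⟨0, h0mem⟩ : sSet)).comp hseq
      rw [hsMap0] at this
      simpa only [Function.comp_def, hsMapn] using this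
    rw [heq, TzTop, nhds_induced] at h1
    have h2 : Tendsto (fun n : ℕ => Tz z (Finsupp.single (n + 1) 1)) atTop
        (@nhds _ (@instTopologicalSpaceProd _ _ tau inferInstance) (Tz z 0)) :=
      tendsto_comap_iff.mp h1
    have h3 : Tendsto (fun n : ℕ => (Tz z (Finsupp.single (n + 1) 1)).2) atTop
        (nhds (Tz z 0).2) :=
      ((@continuous_snd _ _ tau _).tendsto _).comp h2
    -- but distances are constantly dist z 1 > 0
    have hbdd : ∀ m : ℕ, BddAbove (Set.range fun k =>
        dist (z ^ ((Finsupp.single m 1 : ℕ →₀ ℤ) k)) (z ^ ((0 : ℕ →₀ ℤ) k))) := by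
      intro m
      refine ⟨2, ?_⟩
      rintro x ⟨k, rfl⟩
      exact F0.dist_circle_le _ _
    have key : ∀ m : ℕ, dist (Tz z (Finsupp.single m 1)).2 (Tz z 0).2 = dist z 1 := by
      intro m
      rw [F0.dist_def]
      have hseqeq : ∀ (x : ℕ →₀ ℤ) (k : ℕ), (Tz z x).2.seq k = z ^ (x k) := fun _ _ => rfl
      simp only [hseqeq]
      apply le_antisymm
      · apply ciSup_le
        intro k
        rcases eq_or_ne k m with rfl | hk
        · simp [Finsupp.single_eq_same]
        · simp only [Finsupp.single_apply, if_neg (Ne.symm hk), Finsupp.coe_zero,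
            Pi.zero_apply, zpow_zero, dist_self]
          exact dist_nonneg
      · have := le_ciSup (hbdd m) m
        simpa [Finsupp.single_eq_same] using this
    have h4 : Tendsto (fun _ : ℕ => dist z 1) atTop (nhds (0 : ℝ)) := by
      have := (tendsto_iff_dist_tendsto_zero).mp h3
      simpa only [key] using this
    have : dist z 1 = 0 := tendsto_nhds_unique tendsto_const_nhds h4
    exact hz1 (dist_eq_zero.mp this)

end
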